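/- Let n ≥ 1, let a_1, …, a_n ∈ [0,1], let g : {0,1}^n → ℝ, and define f : [0,1] → ℝ by f(x) = g( (𝟙[x ≤ a_1], …, 𝟙[x ≤ a_n]) ). Then sup_{x ∈ [0,1]} |x − f(x)| ≥ 1/(2(n+1)). -/

import Mathlib

/-- Noiseless lower bound for non-adaptive interval questions: an estimator built from
the `n` answers to threshold questions `x ≤ a_i?` satisfies
`sup_{x ∈ [0,1]} |x − f(x)| ≥ 1/(2(n+1))`. -/
theorem stmt_18 (n : ℕ) (hn : 1 ≤ n) (a : Fin n → ℝ)
    (ha : ∀ i, a i ∈ Set.Icc (0 : ℝ) 1) (g : (Fin n → Bool) → ℝ)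
    (f : Set.Icc (0 : ℝ) 1 → ℝ)
    (hf : ∀ x : Set.Icc (0 : ℝ) 1, f x = g fun i => decide ((x : ℝ) ≤ a i)) :
    1 / (2 * ((n : ℝ) + 1)) ≤ ⨆ x : Set.Icc (0 : ℝ) 1, |(x : ℝ) - f x| := by
  have hNpos : (0:ℝ) < (n:ℝ) + 1 := by positivity
  -- the range is bounded above
  have hbdd : BddAbove (Set.range fun x : Set.Icc (0:ℝ) 1 => |(x:ℝ) - f x|) := by
    refine ⟨1 + Finset.univ.sup' ⟨fun _ => true, Finset.mem_univ _⟩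
      (fun b : Fin n → Bool => |g b|), ?_⟩
    rintro _ ⟨x, rfl⟩
    have h1 : |(x:ℝ)| ≤ 1 := abs_le.2 ⟨by linarith [x.2.1], x.2.2⟩
    have h2 : |f x| ≤ Finset.univ.sup' ⟨fun _ => true, Finset.mem_univ _⟩
        (fun b : Fin n → Bool => |g b|) := by
      rw [hf]
      exact Finset.le_sup' (fun b => |g b|) (Finset.mem_univ _)
    calc |(x:ℝ) - f x| ≤ |(x:ℝ)| + |f x| := abs_sub _ _
      _ ≤ _ := by linarith
  -- the n+2 sample points k/(n+1)
  have hmem : ∀ k : Fin (n+2), ((k : ℝ)/((n:ℝ)+1)) ∈ Set.Icc (0:ℝ) 1 := by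
    intro k
    constructor
    · positivity
    · rw [div_le_one hNpos]
      have : (k:ℕ) ≤ n + 1 := Nat.le_of_lt_succ k.isLt
      exact_mod_cast this
  set xp : Fin (n+2) → Set.Icc (0:ℝ) 1 := fun k => ⟨(k:ℝ)/((n:ℝ)+1), hmem k⟩ with hxp
  set S : Fin (n+2) → Finset (Fin n) :=
    fun k => Finset.univ.filter (fun i : Fin n => ((xp k : ℝ)) ≤ a i) with hS
  have hcard : ∀ k, (S k).card ≤ n := by
    intro k
    have := Finset.card_filter_le (Finset.univ : Finset (Fin n))
      (fun i : Fin n => ((xp k : ℝ)) ≤ a i)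
    simpa using this
  -- key claim: two distinct points with the same estimate
  have key : ∀ k l : Fin (n+2), k < l → (S k).card = (S l).card →
      1 / (2 * ((n : ℝ) + 1)) ≤ ⨆ x : Set.Icc (0 : ℝ) 1, |(x : ℝ) - f x| := by
    intro k l hlt hcardeq
    have hkle : (k:ℝ) ≤ (l:ℝ) := by exact_mod_cast hlt.le
    have hxkl : ((xp k : ℝ)) ≤ ((xp l : ℝ)) := by
      simp only [hxp]
      gcongr
    -- patterns are nested, equal cards force equality
    have hmono : S l ⊆ S k := by
      intro i hi
      simp only [hS, Finset.mem_filter, Finset.mem_univ, true_and] at hi ⊢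
      exact le_trans hxkl hi
    have hSeq : S l = S k := Finset.eq_of_subset_of_card_le hmono (le_of_eq hcardeq)
    have hpat : ∀ i : Fin n, ((xp k : ℝ) ≤ a i) ↔ ((xp l : ℝ) ≤ a i) := by
      intro i
      have := Finset.ext_iff.mp hSeq i
      simpa [hS, Finset.mem_filter] using this.symm
    have hfeq : f (xp k) = f (xp l) := by
      rw [hf, hf]
      congr 1
      funext i
      exact decide_eq_decide.mpr (hpat i)
    -- gap between the two points
    have hgap : 1 / ((n:ℝ) + 1) ≤ (xp l : ℝ) - (xp k : ℝ) := by
      have h1 : (k:ℝ) + 1 ≤ (l:ℝ) := by exact_mod_cast hlt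
      simp only [hxp]
      rw [div_sub_div_same, le_div_iff₀ hNpos, one_div, inv_mul_cancel₀ (ne_of_gt hNpos)]
      linarith
    have htri : (xp l : ℝ) - (xp k : ℝ) ≤ |(xp k : ℝ) - f (xp k)| + |(xp l : ℝ) - f (xp k)| := by
      have h1 : f (xp k) - (xp k : ℝ) ≤ |(xp k : ℝ) - f (xp k)| := by
        rw [abs_sub_comm]; exact le_abs_self _
      have h2 : (xp l : ℝ) - f (xp k) ≤ |(xp l : ℝ) - f (xp k)| := le_abs_self _
      linarith
    have h12 : 1 / (2 * ((n:ℝ)+1)) + 1 / (2 * ((n:ℝ)+1)) = 1 / ((n:ℝ)+1) := by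
      rw [← add_div, two_mul]
      rw [div_eq_div_iff (by positivity : ((n:ℝ)+1)+((n:ℝ)+1) ≠ 0) (ne_of_gt hNpos)]
      ring
    have hmain : 1 / (2 * ((n:ℝ) + 1)) ≤ |(xp k : ℝ) - f (xp k)| ∨
        1 / (2 * ((n:ℝ) + 1)) ≤ |(xp l : ℝ) - f (xp k)| := by
      by_contra h
      push_neg at h
      linarith [h.1, h.2, hgap, htri]
    rcases hmain with h | h
    · exact le_trans h (le_ciSup hbdd (xp k))
    · rw [hfeq] at h
      exact le_trans h (le_ciSup hbdd (xp l))
  -- pigeonhole on cardinalities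
  obtain ⟨k, l, hkl, hcardeq⟩ := Fintype.exists_ne_map_eq_of_card_lt
    (fun k : Fin (n+2) => (⟨(S k).card, Nat.lt_succ_of_le (hcard k)⟩ : Fin (n+1)))
    (by simp)
  have hcardeq' : (S k).card = (S l).card := by
    have := congrArg Fin.val hcardeq
    simpa using this
  rcases lt_or_gt_of_ne hkl with h | h
  · exact key k l h hcardeq'
  · exact key l k h hcardeq'.symm
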